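/- Let A be a commutative ring with unit and P ∈ A[y] a monic polynomial of degree d > 0. Let e > 0 be a divisor of d which is invertible in A. Then there exists a unique monic polynomial Q ∈ A[y] of degree d/e such that the degree of P - Q^e is strictly less than d - d/e. -/
import Mathlib

open Polynomial Finset

/-- The "derivative-like" geometric sum `S = ∑ Q'^i Q^(e-1-i)` has degree at most
`(e-1)*m` and its coefficient there is `e`, when `Q, Q'` are monic of degree `m`. -/
private lemma keyS {A : Type*} [CommRing A] {e m : ℕ} (he : 0 < e) {Q Q' : A[X]}
    (hQ : Q.Monic) (hQ' : Q'.Monic) (hdQ : Q.natDegree = m) (hdQ' : Q'.natDegree = m) :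
    (∑ i ∈ range e, Q' ^ i * Q ^ (e - 1 - i)).natDegree ≤ (e - 1) * m ∧
    (∑ i ∈ range e, Q' ^ i * Q ^ (e - 1 - i)).coeff ((e - 1) * m) = (e : A) := by
  have hterm : ∀ i ∈ range e, (Q' ^ i * Q ^ (e - 1 - i)).Monic ∧
      (Q' ^ i * Q ^ (e - 1 - i)).natDegree = (e - 1) * m := by
    intro i hi
    have hi' : i ≤ e - 1 := by
      have := mem_range.mp hi; omega
    have h1 : (Q' ^ i).Monic := hQ'.pow _
    have h2 : (Q ^ (e - 1 - i)).Monic := hQ.pow _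
    refine ⟨h1.mul h2, ?_⟩
    rw [Monic.natDegree_mul h1 h2, hQ'.natDegree_pow, hQ.natDegree_pow, hdQ, hdQ']
    have : i + (e - 1 - i) = e - 1 := by omega
    calc i * m + (e - 1 - i) * m = (i + (e - 1 - i)) * m := by ring
      _ = (e - 1) * m := by rw [this]
  constructor
  · apply natDegree_sum_le_of_forall_le
    intro i hi
    exact le_of_eq (hterm i hi).2
  · rw [finset_sum_coeff]
    have : ∀ i ∈ range e, (Q' ^ i * Q ^ (e - 1 - i)).coeff ((e - 1) * m) = 1 := by
      intro i hi
      obtain ⟨hmon, hdeg⟩ := hterm i hi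
      rw [← hdeg]
      exact hmon.coeff_natDegree
    rw [Finset.sum_congr rfl this]
    simp

/-- **Approximate roots** (statement 0).
Let `A` be a commutative ring with unit and `P ∈ A[y]` a monic polynomial of degree
`d > 0`.  Let `e > 0` be a divisor of `d` which is invertible in `A`.  Then there exists
a unique monic polynomial `Q ∈ A[y]` of degree `d / e` such that
`deg (P - Q ^ e) < d - d / e`.  `Q` is the `e`-th approximate root of `P`. -/
theorem stmt0 {A : Type*} [CommRing A] (P : Polynomial A) (d e : ℕ)
    (hd : 0 < d) (hP : P.Monic) (hdeg : P.natDegree = d)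
    (he : 0 < e) (hdvd : e ∣ d) (hunit : IsUnit (e : A)) :
    ∃! Q : Polynomial A, Q.Monic ∧ Q.natDegree = d / e ∧
      (P - Q ^ e).degree < ((d - d / e : ℕ) : WithBot ℕ) := by
  haveI : Nontrivial A := by
    rcases subsingleton_or_nontrivial A with h | h
    · exfalso
      have : P = 0 := Subsingleton.elim _ _
      rw [this, natDegree_zero] at hdeg
      omega
    · exact h
  set m := d / e with hm_def
  have hm : m * e = d := Nat.div_mul_cancel hdvd
  have hmpos : 0 < m := by
    rcases Nat.eq_zero_or_pos m with h | h
    · rw [h, zero_mul] at hm; omega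
    · exact h
  have hD : (e - 1) * m + m = d := by
    have h1 : (e - 1) + 1 = e := Nat.succ_pred_eq_of_pos he
    calc (e - 1) * m + m = ((e - 1) + 1) * m := by ring
      _ = e * m := by rw [h1]
      _ = d := by rw [mul_comm]; exact hm
  set D := (e - 1) * m with hD_def
  have hmd : m ≤ d := by omega
  have hdm : d - m = D := by omega
  have hPne : P ≠ 0 := hP.ne_zero
  have hPdeg : P.degree = (d : WithBot ℕ) := by
    rw [degree_eq_natDegree hPne, hdeg]
  -- Existence by induction: approximate to order k
  have ex : ∀ k, k ≤ m → ∃ Q : A[X], Q.Monic ∧ Q.natDegree = m ∧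
      (P - Q ^ e).degree < ((d - k : ℕ) : WithBot ℕ) := by
    intro k
    induction k with
    | zero =>
      intro _
      refine ⟨X ^ m, monic_X_pow m, natDegree_X_pow m, ?_⟩
      have h1 : ((X : A[X]) ^ m) ^ e = X ^ d := by rw [← pow_mul, hm]
      rw [h1, Nat.sub_zero]
      have hXd : (X ^ d : A[X]).Monic := monic_X_pow d
      have hXdeg : (X ^ d : A[X]).degree = (d : WithBot ℕ) := degree_X_pow d
      have := degree_sub_lt (p := P) (q := X ^ d)
        (by rw [hPdeg, hXdeg]) hPne (by rw [hP.leadingCoeff, hXd.leadingCoeff])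
      rwa [hPdeg] at this
    | succ k ih =>
      intro hk
      obtain ⟨Q, hQ, hQd, hlt⟩ := ih (by omega)
      set c := (P - Q ^ e).coeff (d - (k + 1)) with hc
      set a := (↑hunit.unit⁻¹ : A) * c with ha
      set R := C a * X ^ (m - 1 - k) with hR
      have hQdeg : Q.degree = (m : WithBot ℕ) := by
        rw [degree_eq_natDegree hQ.ne_zero, hQd]
      have hRltQ : R.degree < Q.degree := by
        refine lt_of_le_of_lt (degree_C_mul_X_pow_le _ _) ?_
        rw [hQdeg]
        exact_mod_cast (by omega : m - 1 - k < m)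
      have hQ'm : (Q + R).Monic := hQ.add_of_left hRltQ
      have hQ'deg : (Q + R).degree = (m : WithBot ℕ) := by
        rw [degree_add_eq_left_of_degree_lt hRltQ, hQdeg]
      have hQ'd : (Q + R).natDegree = m := natDegree_eq_of_degree_eq_some hQ'deg
      obtain ⟨hSdeg, hScoeff⟩ := keyS he hQ hQ'm hQd hQ'd
      set S := ∑ i ∈ range e, (Q + R) ^ i * Q ^ (e - 1 - i) with hS
      have hgeom : (Q + R) ^ e - Q ^ e = R * S := by
        have h := geom_sum₂_mul (Q + R) Q e
        rw [← hS] at h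
        have h2 : Q + R - Q = R := by ring
        rw [h2] at h
        rw [← h]; ring
      refine ⟨Q + R, hQ'm, hQ'd, ?_⟩
      rw [degree_lt_iff_coeff_zero]
      intro n hn
      have hn' : d - (k + 1) ≤ n := by exact_mod_cast hn
      have hsplit : P - (Q + R) ^ e = (P - Q ^ e) - R * S := by
        rw [← hgeom]; ring
      rw [hsplit, coeff_sub]
      have hRSdeg : (R * S).natDegree ≤ d - (k + 1) := by
        refine le_trans (natDegree_mul_le) ?_
        have hRn : R.natDegree ≤ m - 1 - k := natDegree_C_mul_X_pow_le _ _
        have : m - 1 - k + D = d - (k + 1) := by omega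
        omega
      rcases eq_or_lt_of_le hn' with heq | hlt2
      · -- n = d - (k+1) : coefficients cancel
        have hPQ : (P - Q ^ e).coeff n = c := by rw [hc, heq]
        have hRS : (R * S).coeff n = c := by
          have harith : D + (m - 1 - k) = n := by omega
          rw [hR, mul_comm (C a) (X ^ (m - 1 - k)), mul_assoc, ← harith,
            coeff_X_pow_mul, coeff_C_mul, hScoeff, ha]
          rw [mul_comm (↑hunit.unit⁻¹ : A) c, mul_assoc]
          have : ((↑hunit.unit⁻¹ : A) * (e : A)) = 1 := by
            rw [mul_comm]
            exact hunit.unit.mul_inv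
          rw [this, mul_one]
        rw [hPQ, hRS, sub_self]
      · -- n > d - (k+1) : both coefficients vanish
        have h1 : (P - Q ^ e).coeff n = 0 := by
          apply coeff_eq_zero_of_degree_lt
          refine lt_of_lt_of_le hlt ?_
          exact_mod_cast (by omega : d - k ≤ n)
        have h2 : (R * S).coeff n = 0 :=
          coeff_eq_zero_of_natDegree_lt (lt_of_le_of_lt hRSdeg hlt2)
        rw [h1, h2, sub_self]
  -- Extract existence at k = m, then prove uniqueness
  obtain ⟨Q, hQ, hQd, hQlt⟩ := ex m le_rfl
  rw [hdm] at hQlt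
  refine ⟨Q, ⟨hQ, hQd, by rwa [hdm]⟩, ?_⟩
  rintro Q' ⟨hQ'1, hQ'2, hQ'3⟩
  rw [hdm] at hQ'3
  by_contra hne
  have hRne : Q' - Q ≠ 0 := sub_ne_zero.mpr hne
  obtain ⟨hSdeg, hScoeff⟩ := keyS he hQ hQ'1 hQd hQ'2
  set S := ∑ i ∈ range e, Q' ^ i * Q ^ (e - 1 - i) with hS
  have hene : (e : A) ≠ 0 := hunit.ne_zero
  have hSne : S ≠ 0 := fun h => hene (by rw [← hScoeff, h, coeff_zero])
  have hSD : S.natDegree = D := le_antisymm hSdeg (le_natDegree_of_ne_zero (by rw [hScoeff]; exact hene))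
  have hSlead : S.leadingCoeff = (e : A) := by
    rw [leadingCoeff, hSD, hScoeff]
  have hgeom : Q' ^ e - Q ^ e = (Q' - Q) * S := by
    have h := geom_sum₂_mul Q' Q e
    rw [← hS] at h
    rw [← h]; ring
  have hmul : ((Q' - Q) * S).degree = (Q' - Q).degree + S.degree := by
    apply degree_mul'
    rw [hSlead]
    intro h
    exact leadingCoeff_ne_zero.mpr hRne ((hunit.mul_right_eq_zero).mp (by rw [mul_comm] at h; exact h))
  have hge : (D : WithBot ℕ) ≤ ((Q' - Q) * S).degree := by
    rw [hmul, degree_eq_natDegree hRne, degree_eq_natDegree hSne, hSD]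
    exact_mod_cast (by omega : D ≤ (Q' - Q).natDegree + D)
  have hlt : ((Q' - Q) * S).degree < (D : WithBot ℕ) := by
    rw [← hgeom]
    have h1 : Q' ^ e - Q ^ e = (P - Q ^ e) - (P - Q' ^ e) := by ring
    rw [h1]
    exact lt_of_le_of_lt (degree_sub_le _ _) (max_lt hQlt hQ'3)
  exact absurd (lt_of_le_of_lt hge hlt) (lt_irrefl _)
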